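/- If a monotone measure ν is null-continuous and weakly null-additive, and nonnegative measurable functions f, g satisfy ∫_A f dν = ∫_A g dν < ∞ for every measurable A, then ν({f ≠ g}) = 0. -/

import Mathlib

open MeasureTheory Filter Set
open scoped NNReal ENNReal NNRat

variable {U : Type*}

/-- The Choquet integral of `f` w.r.t. the set function `ν` on the set `A`:
`∫₀^∞ ν({f ≥ t} ∩ A) dt`. -/
noncomputable def Choquet [MeasurableSpace U] (ν : Set U → ENNReal) (f : U → ENNReal)
    (A : Set U) : ENNReal :=
  ∫⁻ t in Set.Ioi (0 : ℝ), ν ({x | ENNReal.ofReal t ≤ f x} ∩ A)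

/-- A monotone measure: vanishes at `∅` and is monotone on measurable sets. -/
def IsMonotoneMeasure [MeasurableSpace U] (ν : Set U → ENNReal) : Prop :=
  ν ∅ = 0 ∧ ∀ A B : Set U, MeasurableSet A → MeasurableSet B → A ⊆ B → ν A ≤ ν B

/-- The decomposition inequalities for the ordered pair `(μ, ν)` w.r.t. a family
`A : NNRat → Set U`, stated additively (no truncated subtraction):
`α(ν(S∩A_α) − ν(S∩A_β)) ≤ μ(S∩A_α) − μ(S∩A_β) ≤ β(ν(S∩A_α) − ν(S∩A_β))`
for all measurable `S` of finite `μ`- and `ν`-measure and rationals `α < β`. -/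
def DecompIneq [MeasurableSpace U] (μ ν : Set U → ENNReal) (A : NNRat → Set U) : Prop :=
  ∀ S : Set U, MeasurableSet S → μ S ≠ ⊤ → ν S ≠ ⊤ →
    ∀ α β : NNRat, α < β →
      (((α : ℝ≥0) : ENNReal) * ν (S ∩ A α) + μ (S ∩ A β)
          ≤ μ (S ∩ A α) + ((α : ℝ≥0) : ENNReal) * ν (S ∩ A β)) ∧
      (μ (S ∩ A α) + ((β : ℝ≥0) : ENNReal) * ν (S ∩ A β)
          ≤ ((β : ℝ≥0) : ENNReal) * ν (S ∩ A α) + μ (S ∩ A β))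

/-- The decomposition property: a decreasing family of measurable sets with `A 0 = univ`
satisfying the decomposition inequalities. -/
def DecompProp [MeasurableSpace U] (μ ν : Set U → ENNReal) (A : NNRat → Set U) : Prop :=
  (∀ α, MeasurableSet (A α)) ∧ A 0 = Set.univ ∧ Antitone A ∧ DecompIneq μ ν A

/-- Comonotonicity for `ℝ≥0∞`-valued functions. -/
def Comonotone (f g : U → ENNReal) : Prop :=
  ∀ s t : U, (f s ≤ f t ∧ g s ≤ g t) ∨ (f t ≤ f s ∧ g t ≤ g s)

section Aux

variable [MeasurableSpace U]

lemma choquet_le_of_le (ν : Set U → ENNReal) (hν : IsMonotoneMeasure ν)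
    {f : U → ENNReal} (hf : Measurable f) {A : Set U} (hA : MeasurableSet A)
    {a : ℝ} (ha : 0 ≤ a) (hfa : ∀ x ∈ A, f x ≤ ENNReal.ofReal a) :
    Choquet ν f A ≤ ν A * ENNReal.ofReal a := by
  unfold Choquet
  rw [← lintegral_indicator measurableSet_Ioi]
  have h1 : ∀ t : ℝ, (Set.Ioi (0:ℝ)).indicator
      (fun t => ν ({x | ENNReal.ofReal t ≤ f x} ∩ A)) t
      ≤ (Set.Ioc (0:ℝ) a).indicator (fun _ => ν A) t := by
    intro t
    by_cases ht : t ∈ Set.Ioi (0:ℝ)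
    · rw [Set.indicator_of_mem ht]
      by_cases hta : t ≤ a
      · rw [Set.indicator_of_mem (Set.mem_Ioc.2 ⟨Set.mem_Ioi.1 ht, hta⟩)]
        exact hν.2 _ _ ((hf measurableSet_Ici).inter hA) hA Set.inter_subset_right
      · have hempty : {x | ENNReal.ofReal t ≤ f x} ∩ A = ∅ := by
          ext x
          simp only [Set.mem_inter_iff, Set.mem_setOf_eq, Set.mem_empty_iff_false, iff_false,
            not_and]
          intro hle hxA
          exact absurd (hle.trans (hfa x hxA))
            (not_le.2 ((ENNReal.ofReal_lt_ofReal_iff (Set.mem_Ioi.1 ht)).2 (not_le.1 hta)))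
        rw [hempty, hν.1]
        exact zero_le
    · rw [Set.indicator_of_notMem ht]
      exact zero_le
  calc (∫⁻ t, (Set.Ioi (0:ℝ)).indicator
      (fun t => ν ({x | ENNReal.ofReal t ≤ f x} ∩ A)) t)
      ≤ ∫⁻ t, (Set.Ioc (0:ℝ) a).indicator (fun _ => ν A) t := lintegral_mono h1
    _ = ν A * volume (Set.Ioc (0:ℝ) a) := lintegral_indicator_const measurableSet_Ioc _
    _ = ν A * ENNReal.ofReal a := by rw [Real.volume_Ioc, sub_zero]

lemma le_choquet_of_le (ν : Set U → ENNReal)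
    {g : U → ENNReal} {A : Set U}
    {b : ℝ} (hgb : ∀ x ∈ A, ENNReal.ofReal b ≤ g x) :
    ν A * ENNReal.ofReal b ≤ Choquet ν g A := by
  unfold Choquet
  rw [← lintegral_indicator measurableSet_Ioi]
  have h1 : ∀ t : ℝ, (Set.Ioc (0:ℝ) b).indicator (fun _ => ν A) t
      ≤ (Set.Ioi (0:ℝ)).indicator
      (fun t => ν ({x | ENNReal.ofReal t ≤ g x} ∩ A)) t := by
    intro t
    by_cases ht : t ∈ Set.Ioc (0:ℝ) b
    · rw [Set.indicator_of_mem ht, Set.indicator_of_mem (Set.mem_Ioi.2 ht.1)]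
      have : {x | ENNReal.ofReal t ≤ g x} ∩ A = A := by
        apply Set.inter_eq_self_of_subset_right
        intro x hxA
        exact le_trans (ENNReal.ofReal_le_ofReal ht.2) (hgb x hxA)
      rw [this]
    · rw [Set.indicator_of_notMem ht]
      exact zero_le
  calc ν A * ENNReal.ofReal b = ν A * volume (Set.Ioc (0:ℝ) b) := by
        rw [Real.volume_Ioc, sub_zero]
    _ = ∫⁻ t, (Set.Ioc (0:ℝ) b).indicator (fun _ => ν A) t :=
        (lintegral_indicator_const measurableSet_Ioc _).symm
    _ ≤ _ := lintegral_mono h1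

lemma choquet_lt_null (ν : Set U → ENNReal)
    (hν : IsMonotoneMeasure ν)
    (hwna : ∀ A B : Set U, MeasurableSet A → MeasurableSet B →
      ν A = 0 → ν B = 0 → ν (A ∪ B) = 0)
    (hnc : ∀ A : ℕ → Set U, (∀ n, MeasurableSet (A n)) → Monotone A →
      (∀ n, ν (A n) = 0) → ν (⋃ n, A n) = 0)
    (f g : U → ENNReal) (hf : Measurable f) (hg : Measurable g)
    (heq : ∀ A : Set U, MeasurableSet A → Choquet ν f A = Choquet ν g A)
    (hfin : ∀ A : Set U, MeasurableSet A → Choquet ν f A ≠ ⊤) :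
    ν {x | f x < g x} = 0 := by
  classical
  set E : ℚ × ℚ → Set U := fun p =>
    if 0 ≤ p.1 ∧ p.1 < p.2 then
      {x | f x ≤ ENNReal.ofReal (p.1 : ℝ)} ∩ {x | ENNReal.ofReal (p.2 : ℝ) ≤ g x}
    else ∅ with hE
  have measE : ∀ p, MeasurableSet (E p) := by
    intro p
    by_cases hp : 0 ≤ p.1 ∧ p.1 < p.2
    · simp only [hE, if_pos hp]
      exact (hf measurableSet_Iic).inter (hg measurableSet_Ici)
    · simp only [hE, if_neg hp]
      exact MeasurableSet.empty
  have nullE : ∀ p, ν (E p) = 0 := by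
    intro p
    by_cases hp : 0 ≤ p.1 ∧ p.1 < p.2
    case neg => simp only [hE, if_neg hp]; exact hν.1
    case pos =>
      simp only [hE, if_pos hp]
      obtain ⟨hq0, hqr⟩ := hp
      set A := {x | f x ≤ ENNReal.ofReal (p.1 : ℝ)} ∩ {x | ENNReal.ofReal (p.2 : ℝ) ≤ g x}
        with hAdef
      have hA : MeasurableSet A := (hf measurableSet_Iic).inter (hg measurableSet_Ici)
      have h1 : Choquet ν f A ≤ ν A * ENNReal.ofReal (p.1 : ℝ) :=
        choquet_le_of_le ν hν hf hA (by exact_mod_cast hq0) (fun x hx => hx.1)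
      have h2 : ν A * ENNReal.ofReal (p.2 : ℝ) ≤ Choquet ν g A :=
        le_choquet_of_le ν (fun x hx => hx.2)
      have hkey : ν A * ENNReal.ofReal (p.2 : ℝ) ≤ ν A * ENNReal.ofReal (p.1 : ℝ) :=
        h2.trans ((heq A hA).symm.le.trans h1)
      have hr0 : (0:ℝ) < (p.2 : ℝ) := by exact_mod_cast lt_of_le_of_lt hq0 hqr
      have hne : ν A * ENNReal.ofReal (p.2 : ℝ) ≠ ⊤ := by
        intro htop
        exact hfin A hA (top_le_iff.1 (htop ▸ (h2.trans (heq A hA).symm.le)))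
      by_contra h0
      have hAtop : ν A ≠ ⊤ := by
        intro htop
        apply hne
        rw [htop, ENNReal.top_mul (by simpa using ENNReal.ofReal_pos.2 hr0 |>.ne')]
      have hlt : ν A * ENNReal.ofReal (p.1 : ℝ) < ν A * ENNReal.ofReal (p.2 : ℝ) := by
        apply ENNReal.mul_lt_mul_right h0 hAtop
        exact ENNReal.ofReal_lt_ofReal_iff hr0 |>.2 (by exact_mod_cast hqr)
      exact absurd hkey (not_le.2 hlt)
  -- enumerate pairs of rationals
  let d : ℕ → ℚ × ℚ := (Denumerable.eqv (ℚ × ℚ)).symm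
  have hdsurj : Function.Surjective d := (Denumerable.eqv (ℚ × ℚ)).symm.surjective
  set C : ℕ → Set U := fun n => ⋃ k ∈ Finset.range (n + 1), E (d k) with hC
  have measC : ∀ n, MeasurableSet (C n) := fun n =>
    (Finset.range (n + 1)).measurableSet_biUnion (fun k _ => measE (d k))
  have nullC : ∀ n, ν (C n) = 0 := by
    intro n
    induction n with
    | zero => simpa [hC] using nullE (d 0)
    | succ n ih =>
      have hsplit : C (n + 1) = C n ∪ E (d (n + 1)) := by
        simp only [hC]
        rw [Finset.range_add_one, Finset.set_biUnion_insert, Set.union_comm]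
      rw [hsplit]
      exact hwna _ _ (measC n) (measE _) ih (nullE _)
  have monoC : Monotone C := by
    intro m n hmn
    apply Set.iUnion₂_subset
    intro k hk
    have hk' : k ∈ Finset.range (n + 1) :=
      Finset.mem_range.2 (lt_of_lt_of_le (Finset.mem_range.1 hk) (Nat.succ_le_succ hmn))
    exact Set.subset_biUnion_of_mem (u := fun k => E (d k)) hk'
  have hUnull : ν (⋃ n, C n) = 0 := hnc C measC monoC nullC
  have hcover : {x | f x < g x} ⊆ ⋃ n, C n := by
    intro x hx
    simp only [Set.mem_setOf_eq] at hx
    obtain ⟨q, hq0, hfq, hqg⟩ := ENNReal.lt_iff_exists_rat_btwn.1 hx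
    obtain ⟨r, hr0, hqr, hrg⟩ := ENNReal.lt_iff_exists_rat_btwn.1 hqg
    have hqrlt : q < r := by
      by_contra hle
      exact absurd hqr (not_lt.2 (by
        exact_mod_cast ENNReal.coe_le_coe.2 (Real.toNNReal_mono (by exact_mod_cast not_lt.1 hle))))
    obtain ⟨n, hn⟩ := hdsurj (q, r)
    have hxE : x ∈ E (q, r) := by
      simp only [hE]
      rw [if_pos (⟨hq0, hqrlt⟩ : 0 ≤ (q,r).1 ∧ (q,r).1 < (q,r).2)]
      constructor
      · exact hfq.le
      · exact hrg.le
    refine Set.mem_iUnion.2 ⟨n, ?_⟩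
    rw [hC]
    refine Set.mem_biUnion (Finset.self_mem_range_succ n) ?_
    rw [hn]; exact hxE
  exact le_antisymm (hUnull ▸ hν.2 _ _ (measurableSet_lt hf hg)
    (MeasurableSet.iUnion measC) hcover) zero_le

end Aux

theorem choquet_ae_unique [MeasurableSpace U] (ν : Set U → ENNReal)
    (hν : IsMonotoneMeasure ν)
    (hwna : ∀ A B : Set U, MeasurableSet A → MeasurableSet B →
      ν A = 0 → ν B = 0 → ν (A ∪ B) = 0)
    (hnc : ∀ A : ℕ → Set U, (∀ n, MeasurableSet (A n)) → Monotone A →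
      (∀ n, ν (A n) = 0) → ν (⋃ n, A n) = 0)
    (f g : U → ENNReal) (hf : Measurable f) (hg : Measurable g)
    (heq : ∀ A : Set U, MeasurableSet A → Choquet ν f A = Choquet ν g A)
    (hfin : ∀ A : Set U, MeasurableSet A → Choquet ν f A ≠ ⊤) :
    ν {x | f x ≠ g x} = 0 := by
  have h1 : ν {x | f x < g x} = 0 :=
    choquet_lt_null ν hν hwna hnc f g hf hg heq hfin
  have heq' : ∀ A : Set U, MeasurableSet A → Choquet ν g A = Choquet ν f A :=
    fun A hA => (heq A hA).symm
  have hfin' : ∀ A : Set U, MeasurableSet A → Choquet ν g A ≠ ⊤ :=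
    fun A hA => (heq A hA) ▸ hfin A hA
  have h2 : ν {x | g x < f x} = 0 :=
    choquet_lt_null ν hν hwna hnc g f hg hf heq' hfin'
  have hsplit : {x | f x ≠ g x} = {x | f x < g x} ∪ {x | g x < f x} := by
    ext x
    simp only [Set.mem_setOf_eq, Set.mem_union]
    exact ne_iff_lt_or_gt
  rw [hsplit]
  exact hwna _ _ (measurableSet_lt hf hg) (measurableSet_lt hg hf) h1 h2
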